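/- Let t = n - 2k > 0, s = ⌈k/t⌉, P = {1,…,k}, and for 0 ≤ i ≤ s let Δ(i) = {B ∈ [X]^{n-k} : d(P,B) = 2i+1} where d is graph distance in L_{k,n}. Then |Δ(i)| = Σ_{j=1}^{t} C(k, k - ((i-1)t + j))·C(n-k, it + j), with out-of-range binomial coefficients equal to 0. -/

import Mathlib

/-- Vertices of the level graph: k-element and (n-k)-element subsets of {1,…,n}. -/
def LevelVert (n k : ℕ) := {A : Finset (Fin n) // A.card = k ∨ A.card = n - k}

/-- The (k,n)-level graph L_{k,n}. -/
def levelGraph (n k : ℕ) : SimpleGraph (LevelVert n k) where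
  Adj A B := A ≠ B ∧
    ((A.1.card = k ∧ B.1.card = n - k ∧ A.1 ⊆ B.1) ∨
     (B.1.card = k ∧ A.1.card = n - k ∧ B.1 ⊆ A.1))
  symm := by constructor; intro A B h; exact ⟨Ne.symm h.1, h.2.elim Or.inr Or.inl⟩
  loopless := by constructor; intro A h; exact h.1 rfl

/-- The initial vertex P = {1,…,k} (as a subset of Fin n). -/
def Pset (n k : ℕ) : Finset (Fin n) := Finset.univ.filter (fun x => (x : ℕ) < k)

/-- Extended binomial coefficient: C(a,b) = 0 for b < 0 (and for b > a, via Nat.choose). -/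
def C (a : ℕ) (b : ℤ) : ℕ := if 0 ≤ b then a.choose b.toNat else 0

lemma Pset_card {n k : ℕ} (h : k ≤ n) : (Pset n k).card = k := by
  unfold Pset
  rw [Finset.card_filter, Fin.sum_univ_eq_sum_range (fun x => if x < k then 1 else 0),
    Finset.sum_ite, Finset.sum_const, Finset.sum_const]
  have : Finset.filter (fun i => i < k) (Finset.range n) = Finset.range k := by
    ext x; simp; omega
  simp [this]

lemma walk_bound {n k : ℕ} (hk : 0 < k) (hkn : k < n - k) (V Q : LevelVert n k)
    (W : (levelGraph n k).Walk V Q) (hPc : Q.1.card = k) :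
    (V.1.card = k → Even W.length ∧ k ≤ (Q.1 ∩ V.1).card + (W.length / 2) * (n - 2*k)) ∧
    (V.1.card = n - k → Odd W.length ∧ k ≤ (Q.1 ∩ V.1).card + (W.length / 2) * (n - 2*k)) := by
  have hne : k ≠ n - k := Nat.ne_of_lt hkn
  induction W with
  | nil =>
    constructor
    · intro _
      simp [Finset.inter_self, hPc]
    · intro h; rw [hPc] at h; exact absurd h hne
  | @cons u v w h W ih =>
    obtain ⟨hne', hadj⟩ := h
    have ih := ih hPc
    constructor
    · intro hu
      rcases hadj with ⟨h1, h2, h3⟩ | ⟨h1, h2, h3⟩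
      · -- u ⊆ v, v.card = n - k
        obtain ⟨hodd, hle⟩ := ih.2 h2
        obtain ⟨c, hc⟩ := hodd
        have hsub : w.1 ∩ v.1 ⊆ (w.1 ∩ u.1) ∪ (v.1 \ u.1) := by
          intro x hx
          simp only [Finset.mem_inter, Finset.mem_union, Finset.mem_sdiff] at *
          tauto
        have hcard : (v.1 \ u.1).card = n - 2*k := by
          rw [Finset.card_sdiff_of_subset h3, h1, h2]; omega
        have hmle : (w.1 ∩ v.1).card ≤ (w.1 ∩ u.1).card + (n - 2*k) := by
          calc (w.1 ∩ v.1).card ≤ ((w.1 ∩ u.1) ∪ (v.1 \ u.1)).card := Finset.card_le_card hsub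
            _ ≤ (w.1 ∩ u.1).card + (v.1 \ u.1).card := Finset.card_union_le _ _
            _ = (w.1 ∩ u.1).card + (n - 2*k) := by rw [hcard]
        constructor
        · change Even (W.length + 1); rw [hc]; exact ⟨c+1, by omega⟩
        · have h2' : (W.length + 1) / 2 = c + 1 := by omega
          have h3' : W.length / 2 = c := by omega
          rw [h3'] at hle
          have hsm : (c+1) * (n-2*k) = c*(n-2*k) + (n-2*k) := Nat.succ_mul c _
          change k ≤ (w.1 ∩ u.1).card + (W.length + 1) / 2 * (n - 2*k)
          rw [h2', hsm]
          calc k ≤ (w.1 ∩ v.1).card + c * (n - 2*k) := hle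
            _ ≤ (w.1 ∩ u.1).card + (n - 2*k) + c * (n-2*k) := Nat.add_le_add_right hmle _
            _ = (w.1 ∩ u.1).card + (c * (n - 2*k) + (n-2*k)) := by
                rw [Nat.add_assoc, Nat.add_comm (n-2*k)]
      · rw [hu] at h2; exact absurd h2 hne
    · intro hu
      rcases hadj with ⟨h1, h2, h3⟩ | ⟨h1, h2, h3⟩
      · rw [hu] at h1; exact absurd h1.symm hne
      · -- v ⊆ u, v.card = k
        obtain ⟨heven, hle⟩ := ih.1 h1
        obtain ⟨c, hc⟩ := heven
        have hmono : (w.1 ∩ v.1).card ≤ (w.1 ∩ u.1).card :=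
          Finset.card_le_card (Finset.inter_subset_inter (le_refl _) h3)
        constructor
        · change Odd (W.length + 1); rw [hc]; exact ⟨c, by omega⟩
        · have h2' : (W.length + 1) / 2 = c := by omega
          have h3' : W.length / 2 = c := by omega
          rw [h3'] at hle
          change k ≤ (w.1 ∩ u.1).card + (W.length + 1) / 2 * (n - 2*k)
          rw [h2']
          exact le_trans hle (Nat.add_le_add_right hmono _)

lemma exists_short_walk {n k : ℕ} (hk : 0 < k) (hkn : k < n - k) :
    ∀ (i : ℕ) (A : LevelVert n k) (B : Finset (Fin n)) (hA : A.1.card = k)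
      (hB : B.card = n - k),
    k ≤ (A.1 ∩ B).card + i * (n - 2*k) →
    ∃ W : (levelGraph n k).Walk A ⟨B, Or.inr hB⟩, W.length ≤ 2 * i + 1 := by
  have hne : k ≠ n - k := Nat.ne_of_lt hkn
  have h2k : 2 * k < n := by omega
  intro i
  induction i with
  | zero =>
    intro A B hA hB hle
    simp only [Nat.zero_mul, Nat.add_zero] at hle
    have hsub : A.1 ⊆ B := by
      rw [← Finset.inter_eq_left]
      exact Finset.eq_of_subset_of_card_le Finset.inter_subset_left (by omega)
    have hadj : (levelGraph n k).Adj A ⟨B, Or.inr hB⟩ := by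
      refine ⟨?_, Or.inl ⟨hA, hB, hsub⟩⟩
      intro heq
      have : A.1.card = B.card := by rw [congrArg Subtype.val heq]
      omega
    exact ⟨SimpleGraph.Walk.cons hadj SimpleGraph.Walk.nil, le_of_eq rfl⟩
  | succ i ih =>
    intro A B hA hB hle
    set t := n - 2*k with ht
    set m := (A.1 ∩ B).card with hm
    by_cases hcase : k ≤ m + i * t
    · obtain ⟨W, hW⟩ := ih A B hA hB hcase
      exact ⟨W, by omega⟩
    · push_neg at hcase
      have hmk : m ≤ k := hA ▸ Finset.card_le_card Finset.inter_subset_left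
      set r := min t (k - m) with hr
      have hrt : r ≤ t := min_le_left _ _
      have hrkm : r ≤ k - m := min_le_right _ _
      -- S ⊆ B \ A of card r
      have hBA : (B \ A.1).card = (n - k) - m := by
        have := Finset.card_inter_add_card_sdiff B A.1
        rw [Finset.inter_comm] at this
        omega
      obtain ⟨S, hSsub, hScard⟩ := Finset.exists_subset_card_eq
        (s := B \ A.1) (n := r) (by omega)
      -- X ⊆ A \ B of card r
      have hAB : (A.1 \ B).card = k - m := by
        have := Finset.card_inter_add_card_sdiff A.1 B
        omega
      obtain ⟨X, hXsub, hXcard⟩ := Finset.exists_subset_card_eq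
        (s := A.1 \ B) (n := r) (by omega)
      -- disjointness of S and A
      have hdSA : Disjoint A.1 S := by
        rw [Finset.disjoint_right]
        intro x hx
        exact (Finset.mem_sdiff.1 (hSsub hx)).2
      have hAScard : (A.1 ∪ S).card = k + r := by
        rw [Finset.card_union_of_disjoint hdSA, hA, hScard]
      -- T ⊆ (A ∪ S)ᶜ of card t - r
      have hcompl : ((A.1 ∪ S)ᶜ).card = n - (k + r) := by
        rw [Finset.card_compl, hAScard]; simp
      obtain ⟨T, hTsub, hTcard⟩ := Finset.exists_subset_card_eq
        (s := (A.1 ∪ S)ᶜ) (n := t - r) (by omega)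
      have hdT : Disjoint (A.1 ∪ S) T := by
        rw [Finset.disjoint_right]
        intro x hx
        exact Finset.mem_compl.1 (hTsub hx)
      set Cs := (A.1 ∪ S) ∪ T with hCs
      have hCcard : Cs.card = n - k := by
        rw [Finset.card_union_of_disjoint hdT, hAScard, hTcard]; omega
      -- A' := (A \ X) ∪ S
      set A' := (A.1 \ X) ∪ S with hA'
      have hdA'S : Disjoint (A.1 \ X) S :=
        Finset.disjoint_of_subset_left Finset.sdiff_subset hdSA
      have hXA : X ⊆ A.1 := hXsub.trans Finset.sdiff_subset
      have hA'card : A'.card = k := by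
        rw [Finset.card_union_of_disjoint hdA'S, Finset.card_sdiff_of_subset hXA, hA, hXcard, hScard]
        omega
      have hA'sub : A' ⊆ Cs := by
        apply Finset.union_subset
        · exact (Finset.sdiff_subset.trans Finset.subset_union_left).trans Finset.subset_union_left
        · exact (Finset.subset_union_right).trans Finset.subset_union_left
      -- intersection of A' with B
      have hintA' : A' ∩ B = ((A.1 ∩ B) \ X) ∪ S := by
        ext x
        simp only [hA', Finset.mem_inter, Finset.mem_union, Finset.mem_sdiff]
        constructor
        · rintro ⟨h1 | h1, h2⟩
          · exact Or.inl ⟨⟨h1.1, h2⟩, h1.2⟩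
          · exact Or.inr h1
        · rintro (⟨⟨h1, h2⟩, h3⟩ | h1)
          · exact ⟨Or.inl ⟨h1, h3⟩, h2⟩
          · exact ⟨Or.inr h1, (Finset.mem_sdiff.1 (hSsub h1)).1⟩
      have hdisj2 : Disjoint ((A.1 ∩ B) \ X) S := by
        apply Finset.disjoint_of_subset_left (Finset.sdiff_subset.trans Finset.inter_subset_left) hdSA
      have hXinterB : (A.1 ∩ B) \ X = A.1 ∩ B := by
        apply Finset.sdiff_eq_self_of_disjoint
        rw [Finset.disjoint_right]
        intro x hx
        exact fun hmem => (Finset.mem_sdiff.1 (hXsub hx)).2 (Finset.mem_inter.1 hmem).2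
      have hmA' : (A' ∩ B).card = m + r := by
        rw [hintA', hXinterB,
          Finset.card_union_of_disjoint
            (Finset.disjoint_of_subset_left Finset.inter_subset_left hdSA), hScard]
      -- vertices
      have hCv : Cs.card = k ∨ Cs.card = n - k := Or.inr hCcard
      have hA'v : A'.card = k ∨ A'.card = n - k := Or.inl hA'card
      -- recursive walk from A' to B
      have hrec : k ≤ (A' ∩ B).card + i * t := by
        rw [hmA']
        rcases min_cases t (k - m) with ⟨h1, h2⟩ | ⟨h1, h2⟩
        · have : (i+1) * t = i * t + t := by rw [Nat.succ_mul]
          rw [this] at hle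
          omega
        · have : m + r = k := by omega
          omega
      obtain ⟨W, hW⟩ := ih ⟨A', hA'v⟩ B hA'card hB hrec
      have hadj1 : (levelGraph n k).Adj A ⟨Cs, hCv⟩ := by
        refine ⟨?_, Or.inl ⟨hA, hCcard, Finset.subset_union_left.trans Finset.subset_union_left⟩⟩
        intro heq
        have : A.1.card = Cs.card := by rw [congrArg Subtype.val heq]
        omega
      have hadj2 : (levelGraph n k).Adj ⟨Cs, hCv⟩ ⟨A', hA'v⟩ := by
        refine ⟨?_, Or.inr ⟨hA'card, hCcard, hA'sub⟩⟩
        intro heq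
        have hca : Cs = A' := congrArg Subtype.val heq
        rw [hca] at hCcard
        omega
      refine ⟨SimpleGraph.Walk.cons hadj1 (SimpleGraph.Walk.cons hadj2 W), ?_⟩
      change W.length + 1 + 1 ≤ 2 * (i + 1) + 1
      omega

lemma dist_eq_iff {n k : ℕ} (hk : 0 < k) (hkn : k < n - k) (P : LevelVert n k)
    (hPc : P.1.card = k) (B : Finset (Fin n)) (hB : B.card = n - k) (i : ℕ) :
    (levelGraph n k).dist P ⟨B, Or.inr hB⟩ = 2 * i + 1 ↔
      (k ≤ (P.1 ∩ B).card + i * (n - 2*k) ∧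
       ∀ i' < i, ¬ k ≤ (P.1 ∩ B).card + i' * (n - 2*k)) := by
  set t := n - 2*k with ht
  set m := (P.1 ∩ B).card with hm
  set Bv : LevelVert n k := ⟨B, Or.inr hB⟩ with hBv
  have ht0 : 0 < t := by omega
  -- reachability
  have hreach : (levelGraph n k).Reachable P Bv := by
    have hbig : k ≤ m + k * t := by
      have : k ≤ k * t := Nat.le_mul_of_pos_right k ht0
      omega
    obtain ⟨W, _⟩ := exists_short_walk hk hkn k P B hPc hB hbig
    exact ⟨W⟩
  obtain ⟨Wd, hWd⟩ := hreach.exists_walk_length_eq_dist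
  have hbound := (walk_bound hk hkn Bv P Wd.reverse hPc).2 hB
  rw [SimpleGraph.Walk.length_reverse] at hbound
  obtain ⟨hodd, hble⟩ := hbound
  have hdistm : ∀ i', k ≤ m + i' * t →
      (levelGraph n k).dist P Bv ≤ 2 * i' + 1 := by
    intro i' h
    obtain ⟨W, hW⟩ := exists_short_walk hk hkn i' P B hPc hB h
    exact le_trans (SimpleGraph.dist_le W) hW
  constructor
  · intro hd
    rw [hWd] at *
    constructor
    · rw [hd] at hble
      have : (2*i+1)/2 = i := by omega
      rw [this] at hble
      exact hble
    · intro i' hi' hcon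
      have := hdistm i' hcon
      omega
  · rintro ⟨h1, h2⟩
    have hub := hdistm i h1
    obtain ⟨c, hc⟩ := hodd
    have hceq : Wd.length / 2 = c := by omega
    rw [hceq] at hble
    rw [hWd] at hc
    have hci : c ≤ i := by omega
    rcases Nat.lt_or_ge c i with hlt | hge
    · exact absurd hble (h2 c hlt)
    · omega

lemma count_m {n k : ℕ} (hkn : k ≤ n - k) (h2k : 2*k ≤ n) (Pp : Finset (Fin n))
    (hPc : Pp.card = k) (m : ℕ) :
    (Finset.univ.filter
      (fun B : Finset (Fin n) => B.card = n - k ∧ (Pp ∩ B).card = m)).card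
      = k.choose m * (n-k).choose (n - k - m) := by
  have hPcompl : Ppᶜ.card = n - k := by
    rw [Finset.card_compl, hPc]; simp
  have key : (Pp.powersetCard m ×ˢ Ppᶜ.powersetCard (n-k-m)).card
      = k.choose m * (n-k).choose (n-k-m) := by
    rw [Finset.card_product, Finset.card_powersetCard, Finset.card_powersetCard, hPc, hPcompl]
  rw [← key]
  apply Finset.card_bij' (fun B _ => (Pp ∩ B, B \ Pp))
    (fun q _ => q.1 ∪ q.2)
  · intro B hB
    simp only [Finset.mem_filter, Finset.mem_univ, true_and] at hB
    obtain ⟨hBc, hBm⟩ := hB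
    simp only [Finset.mem_product, Finset.mem_powersetCard]
    refine ⟨⟨Finset.inter_subset_left, hBm⟩, ⟨fun x hx => Finset.mem_compl.2 (Finset.mem_sdiff.1 hx).2, ?_⟩⟩
    have := Finset.card_inter_add_card_sdiff B Pp
    rw [Finset.inter_comm] at this
    omega
  · intro q hq
    simp only [Finset.mem_product, Finset.mem_powersetCard] at hq
    obtain ⟨⟨hq1, hq1c⟩, hq2, hq2c⟩ := hq
    have hdisj : Disjoint q.1 q.2 := by
      rw [Finset.disjoint_left]
      intro x hx hx2
      exact Finset.mem_compl.1 (hq2 hx2) (hq1 hx)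
    have hmk : m ≤ k := hPc ▸ (hq1c ▸ Finset.card_le_card hq1)
    simp only [Finset.mem_filter, Finset.mem_univ, true_and]
    constructor
    · rw [Finset.card_union_of_disjoint hdisj, hq1c, hq2c]
      omega
    · have : Pp ∩ (q.1 ∪ q.2) = q.1 := by
        ext x
        simp only [Finset.mem_inter, Finset.mem_union]
        constructor
        · rintro ⟨hx, hx1 | hx2⟩
          · exact hx1
          · exact absurd hx (Finset.mem_compl.1 (hq2 hx2))
        · intro hx
          exact ⟨hq1 hx, Or.inl hx⟩
      rw [this, hq1c]
  · intro B hB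
    simp only [Finset.mem_filter, Finset.mem_univ, true_and] at hB
    show (Pp ∩ B) ∪ (B \ Pp) = B
    rw [Finset.inter_comm]
    exact sup_inf_sdiff B Pp
  · intro q hq
    simp only [Finset.mem_product, Finset.mem_powersetCard] at hq
    obtain ⟨⟨hq1, hq1c⟩, hq2, hq2c⟩ := hq
    have h1 : Pp ∩ (q.1 ∪ q.2) = q.1 := by
      ext x
      simp only [Finset.mem_inter, Finset.mem_union]
      constructor
      · rintro ⟨hx, hx1 | hx2⟩
        · exact hx1
        · exact absurd hx (Finset.mem_compl.1 (hq2 hx2))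
      · intro hx
        exact ⟨hq1 hx, Or.inl hx⟩
    have h2 : (q.1 ∪ q.2) \ Pp = q.2 := by
      ext x
      simp only [Finset.mem_sdiff, Finset.mem_union]
      constructor
      · rintro ⟨hx1 | hx2, hx⟩
        · exact absurd (hq1 hx1) hx
        · exact hx2
      · intro hx
        exact ⟨Or.inr hx, Finset.mem_compl.1 (hq2 hx)⟩
    rw [Prod.ext_iff]
    exact ⟨h1, h2⟩

theorem card_Delta (n k : ℕ) (hk : 0 < k) (hkn : k < n - k)
    (P : LevelVert n k) (hP : P.1 = Pset n k)
    (i : ℕ) (hi : i ≤ (k + (n - 2 * k) - 1) / (n - 2 * k)) :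
    Nat.card {B : LevelVert n k //
        B.1.card = n - k ∧ (levelGraph n k).dist P B = 2 * i + 1} =
      ∑ j ∈ Finset.Icc 1 (n - 2 * k),
        C k ((k : ℤ) - (((i : ℤ) - 1) * (n - 2 * k) + j)) *
        C (n - k) ((i : ℤ) * (n - 2 * k) + j) := by
  classical
  have hPc : P.1.card = k := by rw [hP]; exact Pset_card (by omega)
  have h2k : 2 * k < n := by omega
  -- step 1: pass to finsets
  have e : {B : LevelVert n k //
        B.1.card = n - k ∧ (levelGraph n k).dist P B = 2 * i + 1}
      ≃ {A : Finset (Fin n) // ∃ h : A.card = n - k,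
          (levelGraph n k).dist P ⟨A, Or.inr h⟩ = 2 * i + 1} :=
    { toFun := fun B => ⟨B.1.1, B.2.1, by
        rw [show (⟨B.1.1, Or.inr B.2.1⟩ : LevelVert n k) = B.1 from Subtype.ext rfl]
        exact B.2.2⟩
      invFun := fun A => ⟨⟨A.1, Or.inr A.2.choose⟩, A.2.choose, A.2.choose_spec⟩
      left_inv := fun B => Subtype.ext (Subtype.ext rfl)
      right_inv := fun A => Subtype.ext rfl }
  rw [Nat.card_congr e, Nat.card_eq_fintype_card, Fintype.card_subtype]
  set t := n - 2*k with ht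
  -- the fiber map
  set f : Finset (Fin n) → ℕ := fun A => n - k - ((P.1 ∩ A).card + i * t) with hf
  set p : Finset (Fin n) → Prop := fun A => ∃ h : A.card = n - k,
    (levelGraph n k).dist P ⟨A, Or.inr h⟩ = 2 * i + 1 with hp
  have hpiff : ∀ A : Finset (Fin n), p A ↔
      (A.card = n - k ∧ k ≤ (P.1 ∩ A).card + i * t ∧
        ∀ i' < i, ¬ k ≤ (P.1 ∩ A).card + i' * t) := by
    intro A
    constructor
    · rintro ⟨h, hd⟩
      exact ⟨h, (dist_eq_iff hk hkn P hPc A h i).1 hd⟩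
    · rintro ⟨h, hcond⟩
      exact ⟨h, (dist_eq_iff hk hkn P hPc A h i).2 hcond⟩
  have hmem : ∀ A ∈ Finset.univ.filter p, f A ∈ Finset.Icc 1 t := by
    intro A hA
    rw [Finset.mem_filter] at hA
    obtain ⟨hcard, hc1, hc2⟩ := (hpiff A).1 hA.2
    have hmk : (P.1 ∩ A).card ≤ k :=
      le_trans (Finset.card_le_card Finset.inter_subset_left) (le_of_eq hPc)
    rw [Finset.mem_Icc]
    simp only [hf]
    cases i with
    | zero => simp only [Nat.zero_mul]; omega
    | succ i' =>
      have hlt := hc2 i' (Nat.lt_succ_self i')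
      rw [Nat.succ_mul] at hc1 ⊢
      generalize i' * t = a at hc1 hlt ⊢
      omega
  rw [Finset.card_eq_sum_card_fiberwise hmem]
  apply Finset.sum_congr rfl
  intro j hj
  rw [Finset.mem_Icc] at hj
  have htz : ((t:ℕ) : ℤ) = (n : ℤ) - 2 * k := by omega
  by_cases hc : i * t + j ≤ n - k
  · -- nonempty fiber
    set M := n - k - (i * t + j) with hM
    have hfib : (Finset.univ.filter p).filter (fun A => f A = j)
        = Finset.univ.filter (fun A : Finset (Fin n) =>
            A.card = n - k ∧ (P.1 ∩ A).card = M) := by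
      ext A
      simp only [Finset.mem_filter, Finset.mem_univ, true_and]
      rw [hpiff A]
      constructor
      · rintro ⟨⟨h1, hc1, hc2⟩, hfj⟩
        refine ⟨h1, ?_⟩
        simp only [hf] at hfj
        simp only [hM]
        generalize i * t = b at hc1 hfj hc ⊢
        omega
      · rintro ⟨h1, hmval⟩
        have hMc : (P.1 ∩ A).card = M := hmval
        refine ⟨⟨h1, ?_, ?_⟩, ?_⟩
        · rw [hMc]
          simp only [hM]
          generalize i * t = b at hc ⊢
          omega
        · intro i' hi'
          have hmul : i' * t + t ≤ i * t := by
            calc i' * t + t = (i' + 1) * t := (Nat.succ_mul i' t).symm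
              _ ≤ i * t := Nat.mul_le_mul_right t hi'
          rw [hMc]
          simp only [hM]
          generalize i' * t = a at hmul ⊢
          generalize i * t = b at hmul hc ⊢
          omega
        · simp only [hf]
          rw [hMc]
          simp only [hM]
          generalize i * t = b at hc ⊢
          omega
    rw [hfib, count_m (le_of_lt hkn) (by omega) P.1 hPc M]
    -- match with C terms
    have hv1 : (k : ℤ) - (((i : ℤ) - 1) * ((n:ℤ) - 2 * k) + j) = ((M : ℕ) : ℤ) := by
      have hMz : ((M : ℕ) : ℤ) = ((n:ℤ) - k) - (((i*t : ℕ) : ℤ) + j) := by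
        simp only [hM]
        omega
      rw [hMz]
      push_cast
      linear_combination (i:ℤ) * htz
    have hv2 : ((i : ℤ) * ((n:ℤ) - 2 * k) + j) = (((i * t + j : ℕ)) : ℤ) := by
      push_cast
      linear_combination (-(i:ℤ)) * htz
    have hnkM : n - k - M = i * t + j := by
      simp only [hM]
      generalize i * t = b at hc ⊢
      omega
    rw [hnkM, hv1, hv2]
    simp only [C, Int.le_refl, if_pos (Int.ofNat_nonneg _), Int.toNat_natCast]
  · -- empty fiber
    push_neg at hc
    have hfib : (Finset.univ.filter p).filter (fun A => f A = j) = ∅ := by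
      rw [Finset.filter_eq_empty_iff]
      intro A hA
      rw [Finset.mem_filter] at hA
      obtain ⟨h1, hc1, hc2⟩ := (hpiff A).1 hA.2
      simp only [hf]
      intro hfj
      generalize i * t = b at hc1 hfj hc
      omega
    rw [hfib]
    have hneg : (k : ℤ) - (((i : ℤ) - 1) * ((n:ℤ) - 2 * k) + j) < 0 := by
      have hcz : ((n:ℤ) - k) < ((i*t : ℕ) : ℤ) + j := by omega
      push_cast at hcz
      have hexp : ((i:ℤ) - 1) * ((n:ℤ) - 2*k) = (i:ℤ) * (t:ℤ) - (t:ℤ) := by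
        rw [htz]; ring
      rw [hexp]
      linarith [htz, hcz]
    simp only [Finset.card_empty]
    rw [C, if_neg (not_le.2 hneg), Nat.zero_mul]
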